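/- Let σ be a ℂ-algebra automorphism of the formal power series ring ℂ[[X]]. Then the power series ρ := σ(X) has zero constant coefficient and nonzero coefficient of X, and σ coincides with the substitution homomorphism by ρ: σ(g) = g(ρ) for every g ∈ ℂ[[X]], where g(ρ) denotes the (well-defined, since ρ has zero constant term) substitution of ρ into g. -/

import Mathlib

/-- Substitution of a power series `ρ` with zero constant coefficient into a power series
`g`: the coefficient of degree `d` of `g(ρ)` is the degree-`d` coefficient of
`∑_{n=0}^{d} gₙ ρⁿ` (a finite sum, since `ρⁿ` has no terms of degree `< n` when the
constant coefficient of `ρ` vanishes). -/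
noncomputable def psSubst (g ρ : PowerSeries ℂ) : PowerSeries ℂ :=
  PowerSeries.mk fun d =>
    PowerSeries.coeff (R := ℂ) d (∑ n ∈ Finset.range (d + 1), (PowerSeries.coeff (R := ℂ) n g) • ρ ^ n)

/-- Every `ℂ`-algebra automorphism `σ` of `ℂ[[X]]` is a substitution automorphism:
`ρ := σ(X)` has zero constant coefficient and nonzero coefficient of `X`, and
`σ(g) = g(ρ)` for every `g ∈ ℂ[[X]]`. -/
theorem powerSeries_automorphism_is_substitution
    (σ : PowerSeries ℂ ≃ₐ[ℂ] PowerSeries ℂ) :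
    PowerSeries.constantCoeff (R := ℂ) (σ PowerSeries.X) = 0 ∧
    PowerSeries.coeff (R := ℂ) 1 (σ PowerSeries.X) ≠ 0 ∧
    ∀ g : PowerSeries ℂ, σ g = psSubst g (σ PowerSeries.X) := by
  set ρ : PowerSeries ℂ := σ PowerSeries.X with hρ
  -- constant coefficient of ρ is zero
  have hc0 : PowerSeries.constantCoeff (R := ℂ) ρ = 0 := by
    by_contra h
    have hu : IsUnit ρ := PowerSeries.isUnit_iff_constantCoeff.mpr (isUnit_iff_ne_zero.mpr h)
    have hXu : IsUnit (PowerSeries.X : PowerSeries ℂ) := by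
      have := hu.map σ.symm.toAlgHom
      simpa [hρ] using this
    rw [PowerSeries.isUnit_iff_constantCoeff] at hXu
    simp at hXu
  have hXdvd : (PowerSeries.X : PowerSeries ℂ) ∣ ρ := PowerSeries.X_dvd_iff.mpr hc0
  -- main claim
  have key : ∀ g : PowerSeries ℂ, σ g = psSubst g ρ := by
    intro g
    ext d
    set t : PowerSeries ℂ :=
      ∑ n ∈ Finset.range (d + 1), (PowerSeries.coeff (R := ℂ) n g) • PowerSeries.X ^ n with ht
    have hcoefft : ∀ m ≤ d, PowerSeries.coeff (R := ℂ) m t = PowerSeries.coeff (R := ℂ) m g := by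
      intro m hm
      rw [ht, map_sum, Finset.sum_eq_single m]
      · simp [PowerSeries.coeff_X_pow]
      · intro n _ hn
        simp [PowerSeries.coeff_X_pow, Ne.symm hn]
      · intro hmem
        exact absurd (Finset.mem_range.mpr (Nat.lt_succ_of_le hm)) hmem
    have hdvd : (PowerSeries.X : PowerSeries ℂ) ^ (d + 1) ∣ g - t := by
      rw [PowerSeries.X_pow_dvd_iff]
      intro m hm
      rw [map_sub, hcoefft m (Nat.lt_succ_iff.mp hm), sub_self]
    obtain ⟨h, hh⟩ := hdvd
    have hg : g = t + PowerSeries.X ^ (d + 1) * h := by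
      rw [← hh]; ring
    -- image of t under σ
    have hσt : σ t = ∑ n ∈ Finset.range (d + 1), (PowerSeries.coeff (R := ℂ) n g) • ρ ^ n := by
      rw [ht, map_sum]
      refine Finset.sum_congr rfl fun n _ => ?_
      rw [map_smul, map_pow]
    -- the tail contributes nothing in degree d
    have htail : PowerSeries.coeff (R := ℂ) d (ρ ^ (d + 1) * σ h) = 0 := by
      have hd : (PowerSeries.X : PowerSeries ℂ) ^ (d + 1) ∣ ρ ^ (d + 1) * σ h :=
        Dvd.dvd.mul_right (pow_dvd_pow_of_dvd hXdvd (d + 1)) (σ h)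
      exact PowerSeries.X_pow_dvd_iff.mp hd d (Nat.lt_succ_self d)
    calc PowerSeries.coeff (R := ℂ) d (σ g)
        = PowerSeries.coeff (R := ℂ) d (σ t + ρ ^ (d + 1) * σ h) := by
          rw [hg]
          rw [map_add, map_mul, map_pow, ← hρ]
      _ = PowerSeries.coeff (R := ℂ) d (σ t) := by rw [map_add, htail, add_zero]
      _ = PowerSeries.coeff (R := ℂ) d (psSubst g ρ) := by
          rw [hσt, psSubst, PowerSeries.coeff_mk]
  -- linear coefficient nonzero
  refine ⟨hc0, ?_, key⟩
  intro h1
  obtain ⟨g, hg⟩ := σ.surjective PowerSeries.X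
  have := congrArg (PowerSeries.coeff (R := ℂ) 1) (key g)
  rw [hg] at this
  rw [psSubst, PowerSeries.coeff_mk] at this
  have hsum : PowerSeries.coeff (R := ℂ) 1
      (∑ n ∈ Finset.range 2, (PowerSeries.coeff (R := ℂ) n g) • ρ ^ n) = 0 := by
    rw [Finset.sum_range_succ, Finset.sum_range_one]
    simp [h1, PowerSeries.coeff_one]
  rw [hsum] at this
  simp [PowerSeries.coeff_one_X] at this
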